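/- arXiv:2402.07160 — 4 statements merged into one kernel-verified Lean document; each statement's English description precedes it below -/
import Mathlib

section
/- Let N ≥ 1 and L ≥ 0 be integers, let (𝒳, 𝒜) be a measurable space, and let {X_ℓ^i : ℓ = 0,…,L, i = 1,…,N} be independent and identically distributed 𝒳-valued random variables. Let φ : 𝒳^{L+1} → ℝ be measurable and such that φ(X_0^1, …, X_L^1) is square-integrable. Then: (a) for every index tuple (i_0, …, i_L) ∈ {1,…,N}^{L+1}, Var(φ(X_0^{i_0}, …, X_L^{i_L})) = Var(φ(X_0^1, …, X_L^1)) =: v; and (b) Var( Σ_{i_0=1}^N ⋯ Σ_{i_L=1}^N φ(X_0^{i_0}, …, X_L^{i_L}) ) ≤ N^{L+1} ( N^{L+1} − (N−1)^{L+1} ) · v. -/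
open MeasureTheory ProbabilityTheory

section aux
variable {Ω 𝒳 : Type*} [MeasurableSpace Ω] [m𝒳 : MeasurableSpace 𝒳] {P : Measure Ω}

lemma aux_precomp {ι κ : Type*} {f : ι → Ω → 𝒳} (h : iIndepFun f P)
    {g : κ → ι} (hg : Function.Injective g) :
    iIndepFun (fun k => f (g k)) P := by
  classical
  rw [iIndepFun_iff_measure_inter_preimage_eq_mul] at h ⊢
  intro S sets hsets
  have key := h (S.image g) (sets := Function.extend g sets fun _ => Set.univ) ?_
  · have h1 : (⋂ i ∈ S.image g, f i ⁻¹' Function.extend g sets (fun _ => Set.univ) i)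
        = ⋂ k ∈ S, f (g k) ⁻¹' sets k := by
      ext ω
      simp only [Set.mem_iInter, Finset.mem_image]
      constructor
      · intro hh k hk
        have := hh (g k) ⟨k, hk, rfl⟩
        rwa [hg.extend_apply] at this
      · rintro hh i ⟨k, hk, rfl⟩
        rw [hg.extend_apply]
        exact hh k hk
    rw [h1, Finset.prod_image (fun k _ l _ hkl => hg hkl)] at key
    rw [key]
    exact Finset.prod_congr rfl fun k _ => by rw [hg.extend_apply]
  · intro i hi
    rw [Finset.mem_image] at hi
    obtain ⟨k, hk, rfl⟩ := hi
    rw [hg.extend_apply]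
    exact hsets k hk

lemma aux_map_pi {n : ℕ} [IsProbabilityMeasure P] {f : Fin n → Ω → 𝒳}
    (h : iIndepFun f P) (hm : ∀ k, Measurable (f k)) :
    P.map (fun ω k => f k ω) = Measure.pi (fun k => P.map (f k)) := by
  have : ∀ k, IsProbabilityMeasure (P.map (f k)) :=
    fun k => Measure.isProbabilityMeasure_map (hm k).aemeasurable
  refine (Measure.pi_eq fun s hs => ?_).symm
  rw [Measure.map_apply (measurable_pi_lambda _ hm) (MeasurableSet.univ_pi hs)]
  have hp : (fun ω k => f k ω) ⁻¹' Set.pi Set.univ s = ⋂ k ∈ Finset.univ, f k ⁻¹' s k := by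
    ext ω; simp [Set.mem_pi]
  rw [hp, h.measure_inter_preimage_eq_mul Finset.univ (fun k _ => hs k)]
  exact Finset.prod_congr rfl fun k _ => (Measure.map_apply (hm k) (hs k)).symm

lemma aux_int_mul [IsFiniteMeasure P] {f g : Ω → ℝ} (hf : MemLp f 2 P) (hg : MemLp g 2 P) :
    Integrable (fun ω => f ω * g ω) P := by
  rw [← memLp_one_iff_integrable]
  exact hg.smul (p := 2) (q := 2) (r := 1) (φ := f) hf

lemma aux_cs {f g : Ω → ℝ} (hf : MemLp f 2 P) (hg : MemLp g 2 P) :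
    ∫ ω, f ω * g ω ∂P ≤ Real.sqrt (∫ ω, f ω ^ 2 ∂P) * Real.sqrt (∫ ω, g ω ^ 2 ∂P) := by
  set F := hf.toLp f
  set G := hg.toLp g
  have hFf : (F : Ω → ℝ) =ᵐ[P] f := hf.coeFn_toLp
  have hGg : (G : Ω → ℝ) =ᵐ[P] g := hg.coeFn_toLp
  have hinner : (inner ℝ F G : ℝ) = ∫ ω, f ω * g ω ∂P := by
    rw [L2.inner_def]
    refine integral_congr_ae ?_
    filter_upwards [hFf, hGg] with ω h1 h2
    simp [h1, h2, RCLike.inner_apply, mul_comm]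
  have hnF : ‖F‖ = Real.sqrt (∫ ω, f ω ^ 2 ∂P) := by
    have h2 : (inner ℝ F F : ℝ) = ∫ ω, f ω ^ 2 ∂P := by
      rw [L2.inner_def]
      refine integral_congr_ae ?_
      filter_upwards [hFf] with ω h1
      simp [h1, RCLike.inner_apply, sq]
    rw [← h2, real_inner_self_eq_norm_sq, Real.sqrt_sq (norm_nonneg _)]
  have hnG : ‖G‖ = Real.sqrt (∫ ω, g ω ^ 2 ∂P) := by
    have h2 : (inner ℝ G G : ℝ) = ∫ ω, g ω ^ 2 ∂P := by
      rw [L2.inner_def]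
      refine integral_congr_ae ?_
      filter_upwards [hGg] with ω h1
      simp [h1, RCLike.inner_apply, sq]
    rw [← h2, real_inner_self_eq_norm_sq, Real.sqrt_sq (norm_nonneg _)]
  calc ∫ ω, f ω * g ω ∂P = inner ℝ F G := hinner.symm
    _ ≤ ‖F‖ * ‖G‖ := real_inner_le_norm F G
    _ = _ := by rw [hnF, hnG]

end aux

lemma aux_card (N L : ℕ) (hN : 1 ≤ N) :
    ((Finset.univ.filter
      (fun p : ((Fin (L+1) → Fin N) × (Fin (L+1) → Fin N)) => ¬ ∀ ℓ, p.1 ℓ ≠ p.2 ℓ)).card : ℝ)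
    = (N:ℝ)^(L+1) * ((N:ℝ)^(L+1) - ((N:ℝ)-1)^(L+1)) := by
  classical
  obtain ⟨M, rfl⟩ : ∃ M, N = M + 1 := ⟨N - 1, (Nat.succ_pred_eq_of_pos hN).symm⟩
  have e1 : {p : ((Fin (L+1) → Fin (M + 1)) × (Fin (L+1) → Fin (M + 1))) // ∀ ℓ, p.1 ℓ ≠ p.2 ℓ}
      ≃ (Fin (L+1) → {q : Fin (M + 1) × Fin (M + 1) // q.1 ≠ q.2}) :=
    { toFun := fun p ℓ => ⟨(p.1.1 ℓ, p.1.2 ℓ), p.2 ℓ⟩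
      invFun := fun f => ⟨(fun ℓ => (f ℓ).1.1, fun ℓ => (f ℓ).1.2), fun ℓ => (f ℓ).2⟩
      left_inv := fun p => rfl
      right_inv := fun f => rfl }
  have e2 : {q : Fin (M + 1) × Fin (M + 1) // q.1 = q.2} ≃ Fin (M + 1) :=
    { toFun := fun q => q.1.1
      invFun := fun a => ⟨(a, a), rfl⟩
      left_inv := fun q => by rcases q with ⟨⟨a, b⟩, h⟩; cases h; rfl
      right_inv := fun a => rfl }
  have c2 : Fintype.card {q : Fin (M + 1) × Fin (M + 1) // q.1 ≠ q.2} = (M + 1) * M := by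
    have h := Fintype.card_subtype_compl (fun q : Fin (M + 1) × Fin (M + 1) => q.1 = q.2)
    rw [Fintype.card_congr e2, Fintype.card_prod, Fintype.card_fin] at h
    have : (M + 1) * (M + 1) - (M + 1) = (M + 1) * M := by
      rw [Nat.mul_succ, Nat.add_sub_cancel]
    rw [← this]
    exact h
  have hcard : (Finset.univ.filter
      (fun p : ((Fin (L+1) → Fin (M + 1)) × (Fin (L+1) → Fin (M + 1))) => ¬ ∀ ℓ, p.1 ℓ ≠ p.2 ℓ)).card
      = (M + 1)^(L+1) * (M + 1)^(L+1) - ((M + 1)*M)^(L+1) := by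
    rw [← Fintype.card_subtype, Fintype.card_subtype_compl]
    congr 1
    · rw [Fintype.card_prod, Fintype.card_fun]
      simp
    · rw [Fintype.card_congr e1, Fintype.card_fun, c2]
      simp
  have hle : ((M + 1)*M)^(L+1) ≤ (M + 1)^(L+1) * (M + 1)^(L+1) := by
    rw [← Nat.mul_pow]
    exact Nat.pow_le_pow_left (Nat.mul_le_mul_left _ (Nat.le_succ _)) _
  rw [hcard, mul_pow] at *
  rw [Nat.cast_sub hle]
  push_cast
  ring

section auxmain
variable {Ω : Type*} [MeasurableSpace Ω] {P : Measure Ω}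

lemma aux_main [IsProbabilityMeasure P] {ι : Type*} [Fintype ι]
    (Y : ι → Ω → ℝ) (v μ0 : ℝ) (hvnn : 0 ≤ v)
    (hYL2 : ∀ j, MemLp (Y j) 2 P)
    (hYint : ∀ j, ∫ ω, Y j ω ∂P = μ0)
    (hYvar : ∀ j, variance (Y j) P = v)
    (T : Finset (ι × ι))
    (hT : ∀ p : ι × ι, p ∉ T → IndepFun (Y p.1) (Y p.2) P) :
    variance (fun ω => ∑ j, Y j ω) P ≤ (T.card : ℝ) * v := by
  classical
  set Z : ι → Ω → ℝ := fun j ω => Y j ω - μ0 with hZdef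
  have hYint' : ∀ j, Integrable (Y j) P := fun j => (hYL2 j).integrable one_le_two
  have hZL2 : ∀ j, MemLp (Z j) 2 P := fun j => (hYL2 j).sub (memLp_const μ0)
  have hZint : ∀ j, Integrable (Z j) P := fun j => (hZL2 j).integrable one_le_two
  have hZ0 : ∀ j, ∫ ω, Z j ω ∂P = 0 := by
    intro j
    simp only [hZdef]
    rw [integral_sub (hYint' j) (integrable_const μ0), hYint j, integral_const, probReal_univ,
      one_smul, sub_self]
  have hZsq : ∀ j, ∫ ω, Z j ω ^ 2 ∂P = v := by
    intro j
    have h2 := variance_eq_integral (hYL2 j).aestronglyMeasurable.aemeasurable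
    rw [hYvar j] at h2
    rw [h2]
    refine integral_congr_ae (Filter.Eventually.of_forall fun ω => ?_)
    simp only [hZdef, Pi.pow_apply, Pi.sub_apply, hYint j]
  have hSint : ∫ x, ∑ j, Y j x ∂P = ∑ _j : ι, μ0 := by
    rw [integral_finset_sum _ (fun j _ => hYint' j)]
    exact Finset.sum_congr rfl fun j _ => hYint j
  have hSL2 : MemLp (fun ω => ∑ j, Y j ω) 2 P := by
    have h := memLp_finset_sum' (μ := P) (p := 2) Finset.univ (fun j (_ : j ∈ Finset.univ) => hYL2 j)
    refine h.ae_eq (Filter.Eventually.of_forall fun ω => ?_)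
    simp [Finset.sum_apply]
  rw [variance_eq_integral hSL2.aestronglyMeasurable.aemeasurable]
  change ∫ ω, (((fun ω => ∑ j, Y j ω) - fun _ => ∫ x, ∑ j, Y j x ∂P : Ω → ℝ) ^ 2) ω ∂P ≤ _
  have h1 : (((fun ω => ∑ j, Y j ω) - fun _ => ∫ x, ∑ j, Y j x ∂P : Ω → ℝ)) ^ 2
      =ᵐ[P] fun ω => ∑ j, ∑ k, Z j ω * Z k ω := by
    refine Filter.Eventually.of_forall fun ω => ?_
    simp only [Pi.pow_apply, Pi.sub_apply, hZdef]
    rw [hSint, ← Finset.sum_sub_distrib, sq, Finset.sum_mul_sum]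
  rw [integral_congr_ae h1, integral_finset_sum _ fun j _ =>
    integrable_finset_sum _ fun k _ => aux_int_mul (hZL2 j) (hZL2 k)]
  have h2 : ∀ j ∈ (Finset.univ : Finset ι),
      ∫ ω, ∑ k, Z j ω * Z k ω ∂P = ∑ k, ∫ ω, Z j ω * Z k ω ∂P :=
    fun j _ => integral_finset_sum _ fun k _ => aux_int_mul (hZL2 j) (hZL2 k)
  calc ∑ j, ∫ ω, ∑ k, Z j ω * Z k ω ∂P
      = ∑ j, ∑ k, ∫ ω, Z j ω * Z k ω ∂P := Finset.sum_congr rfl h2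
    _ ≤ ∑ j, ∑ k, (if (j, k) ∈ T then v else 0) := by
        refine Finset.sum_le_sum fun j _ => Finset.sum_le_sum fun k _ => ?_
        by_cases h : (j, k) ∈ T
        · simp only [h, if_true]
          calc ∫ ω, Z j ω * Z k ω ∂P
              ≤ Real.sqrt (∫ ω, Z j ω ^ 2 ∂P) * Real.sqrt (∫ ω, Z k ω ^ 2 ∂P) :=
                aux_cs (hZL2 j) (hZL2 k)
            _ = v := by rw [hZsq j, hZsq k, Real.mul_self_sqrt hvnn]
        · simp only [h, if_false]
          have hind : IndepFun (Z j) (Z k) P := by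
            rw [hZdef]
            exact (hT (j, k) h).comp (measurable_id.sub measurable_const)
              (measurable_id.sub measurable_const)
          have he : ∫ ω, Z j ω * Z k ω ∂P = (∫ ω, Z j ω ∂P) * ∫ ω, Z k ω ∂P :=
            hind.integral_mul_eq_mul_integral (hZint j).aestronglyMeasurable (hZint k).aestronglyMeasurable
          rw [he, hZ0 j, zero_mul]
    _ = (T.card : ℝ) * v := by
        rw [← Fintype.sum_prod_type (f := fun p : ι × ι => if p ∈ T then v else 0)]
        rw [Finset.sum_ite_mem, Finset.univ_inter, Finset.sum_const, nsmul_eq_mul]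

end auxmain

set_option maxHeartbeats 1000000 in
/-- Variance identity and variance bound for sums of product-indexed evaluations of an
i.i.d. array `X ℓ i` of `𝒳`-valued random variables. -/
theorem stmt0 {Ω 𝒳 : Type*} [MeasurableSpace Ω] [MeasurableSpace 𝒳]
    (P : Measure Ω) [IsProbabilityMeasure P]
    (N L : ℕ) (hN : 1 ≤ N)
    (X : Fin (L + 1) → Fin N → Ω → 𝒳)
    (hmeas : ∀ ℓ i, Measurable (X ℓ i))
    (hindep : iIndepFun (fun (p : Fin (L + 1) × Fin N) => X p.1 p.2) P)
    (hident : ∀ p q : Fin (L + 1) × Fin N, IdentDistrib (X p.1 p.2) (X q.1 q.2) P P)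
    (φ : (Fin (L + 1) → 𝒳) → ℝ) (hφ : Measurable φ)
    (hL2 : MemLp (fun ω => φ fun ℓ => X ℓ ⟨0, hN⟩ ω) 2 P) :
    (∀ j : Fin (L + 1) → Fin N,
      variance (fun ω => φ fun ℓ => X ℓ (j ℓ) ω) P
        = variance (fun ω => φ fun ℓ => X ℓ ⟨0, hN⟩ ω) P) ∧
    variance (fun ω => ∑ j : Fin (L + 1) → Fin N, φ fun ℓ => X ℓ (j ℓ) ω) P
      ≤ (N : ℝ) ^ (L + 1) * ((N : ℝ) ^ (L + 1) - ((N : ℝ) - 1) ^ (L + 1)) *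
        variance (fun ω => φ fun ℓ => X ℓ ⟨0, hN⟩ ω) P := by
  classical
  have hmap : ∀ j : Fin (L + 1) → Fin N, P.map (fun ω ℓ => X ℓ (j ℓ) ω)
      = Measure.pi (fun ℓ => P.map (X ℓ ⟨0, hN⟩)) := by
    intro j
    have hinj : Function.Injective (fun ℓ : Fin (L + 1) => (ℓ, j ℓ)) :=
      fun a b hab => congrArg Prod.fst hab
    have hpre : iIndepFun (fun ℓ => X ℓ (j ℓ)) P := aux_precomp hindep hinj
    rw [aux_map_pi hpre (fun ℓ => hmeas ℓ (j ℓ))]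
    congr 1
    funext ℓ
    exact (hident (ℓ, j ℓ) (ℓ, ⟨0, hN⟩)).map_eq
  have hvec : ∀ j : Fin (L + 1) → Fin N, IdentDistrib (fun ω ℓ => X ℓ (j ℓ) ω)
      (fun ω ℓ => X ℓ (⟨0, hN⟩ : Fin N) ω) P P := by
    intro j
    refine ⟨(measurable_pi_lambda _ fun ℓ => hmeas ℓ (j ℓ)).aemeasurable,
      (measurable_pi_lambda _ fun ℓ => hmeas ℓ _).aemeasurable, ?_⟩
    rw [hmap j, hmap (fun _ => ⟨0, hN⟩)]
  have hYid : ∀ j : Fin (L + 1) → Fin N,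
      IdentDistrib (fun ω => φ fun ℓ => X ℓ (j ℓ) ω)
        (fun ω => φ fun ℓ => X ℓ (⟨0, hN⟩ : Fin N) ω) P P :=
    fun j => (hvec j).comp hφ
  have parta : ∀ j : Fin (L + 1) → Fin N,
      variance (fun ω => φ fun ℓ => X ℓ (j ℓ) ω) P
        = variance (fun ω => φ fun ℓ => X ℓ ⟨0, hN⟩ ω) P :=
    fun j => (hYid j).variance_eq
  refine ⟨parta, ?_⟩
  set T : Finset ((Fin (L + 1) → Fin N) × (Fin (L + 1) → Fin N)) :=
    Finset.univ.filter (fun p => ¬ ∀ ℓ, p.1 ℓ ≠ p.2 ℓ) with hT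
  have hTindep : ∀ p : (Fin (L + 1) → Fin N) × (Fin (L + 1) → Fin N), p ∉ T →
      IndepFun (fun ω => φ fun ℓ => X ℓ (p.1 ℓ) ω) (fun ω => φ fun ℓ => X ℓ (p.2 ℓ) ω) P := by
    rintro ⟨j, k⟩ hp
    have hjk : ∀ ℓ, j ℓ ≠ k ℓ := by
      simpa [hT] using hp
    set Sj : Finset (Fin (L + 1) × Fin N) := Finset.univ.image (fun ℓ => (ℓ, j ℓ)) with hSj
    set Sk : Finset (Fin (L + 1) × Fin N) := Finset.univ.image (fun ℓ => (ℓ, k ℓ)) with hSk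
    have hdisj : Disjoint Sj Sk := by
      rw [Finset.disjoint_left]
      rintro p hp1 hp2
      rw [hSj, Finset.mem_image] at hp1
      rw [hSk, Finset.mem_image] at hp2
      obtain ⟨a, -, rfl⟩ := hp1
      obtain ⟨b, -, hb⟩ := hp2
      have hba : b = a := congrArg Prod.fst hb
      subst hba
      exact hjk b (congrArg Prod.snd hb).symm
    have hmemj : ∀ ℓ, (ℓ, j ℓ) ∈ Sj := fun ℓ => Finset.mem_image_of_mem _ (Finset.mem_univ ℓ)
    have hmemk : ∀ ℓ, (ℓ, k ℓ) ∈ Sk := fun ℓ => Finset.mem_image_of_mem _ (Finset.mem_univ ℓ)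
    have hbase := hindep.indepFun_finset Sj Sk hdisj (fun p => hmeas p.1 p.2)
    have hgj : Measurable (fun x : (p : Sj) → 𝒳 => φ (fun ℓ => x ⟨(ℓ, j ℓ), hmemj ℓ⟩)) :=
      hφ.comp (measurable_pi_lambda _ fun ℓ => measurable_pi_apply _)
    have hgk : Measurable (fun x : (p : Sk) → 𝒳 => φ (fun ℓ => x ⟨(ℓ, k ℓ), hmemk ℓ⟩)) :=
      hφ.comp (measurable_pi_lambda _ fun ℓ => measurable_pi_apply _)
    exact hbase.comp hgj hgk
  have hvnn : 0 ≤ variance (fun ω => φ fun ℓ => X ℓ ⟨0, hN⟩ ω) P := variance_nonneg _ _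
  have hmain := aux_main (fun j ω => φ fun ℓ => X ℓ (j ℓ) ω)
    (variance (fun ω => φ fun ℓ => X ℓ ⟨0, hN⟩ ω) P)
    (∫ ω, φ (fun ℓ => X ℓ (⟨0, hN⟩ : Fin N) ω) ∂P) hvnn
    (fun j => (hYid j).symm.memLp_snd hL2)
    (fun j => (hYid j).integral_eq)
    parta T hTindep
  refine le_trans hmain ?_
  have hc : (T.card : ℝ) = (N : ℝ) ^ (L + 1) * ((N : ℝ) ^ (L + 1) - ((N : ℝ) - 1) ^ (L + 1)) := by
    rw [hT]
    exact aux_card N L hN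
  rw [hc]
end

section
/- Let N ≥ 1 and L ≥ 0 be integers, let (𝒳, 𝒜) be a measurable space, and for each ℓ = 0,…,L let ν_ℓ be a probability measure on 𝒳. Let {X_ℓ^i : ℓ = 0,…,L, i = 1,…,N} be independent 𝒳-valued random variables with X_ℓ^i distributed according to ν_ℓ for every i. Then for every bounded measurable φ : 𝒳^{L+1} → ℝ, E[ ( N^{−(L+1)} Σ_{i_0=1}^N ⋯ Σ_{i_L=1}^N φ(X_0^{i_0}, …, X_L^{i_L}) − ∫ φ d(ν_0 ⊗ ν_1 ⊗ ⋯ ⊗ ν_L) )² ] ≤ c_{N,L} · ‖φ‖_∞², where c_{N,L} = 1 − (1 − 1/N)^{L+1}. -/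
open MeasureTheory ProbabilityTheory

/-- Monte Carlo error bound for product-form estimators: if the `X ℓ i` are independent with
`X ℓ i ~ ν ℓ`, then for every bounded measurable `φ` the mean squared error of the
product-form average against `∫ φ d(ν₀ ⊗ ⋯ ⊗ ν_L)` is at most `(1 - (1 - 1/N)^(L+1)) ‖φ‖∞²`. -/
theorem stmt3 {Ω 𝒳 : Type*} [MeasurableSpace Ω] [MeasurableSpace 𝒳]
    (P : Measure Ω) [IsProbabilityMeasure P]
    (N L : ℕ) (hN : 1 ≤ N)
    (ν : Fin (L + 1) → Measure 𝒳) (hν : ∀ ℓ, IsProbabilityMeasure (ν ℓ))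
    (X : Fin (L + 1) → Fin N → Ω → 𝒳)
    (hmeas : ∀ ℓ i, Measurable (X ℓ i))
    (hindep : iIndepFun (fun p : Fin (L + 1) × Fin N => X p.1 p.2) P)
    (hlaw : ∀ ℓ i, Measure.map (X ℓ i) P = ν ℓ)
    (φ : (Fin (L + 1) → 𝒳) → ℝ) (hφmeas : Measurable φ)
    (C : ℝ) (hφb : ∀ x, |φ x| ≤ C) :
    ∫ ω, (((N : ℝ) ^ (L + 1))⁻¹ *
          (∑ j : Fin (L + 1) → Fin N, φ fun ℓ => X ℓ (j ℓ) ω)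
        - ∫ x, φ x ∂(Measure.pi ν)) ^ 2 ∂P
      ≤ (1 - (1 - 1 / (N : ℝ)) ^ (L + 1)) * C ^ 2 := by
  classical
  haveI := hν
  -- basic notation
  set π : Measure (Fin (L + 1) → 𝒳) := Measure.pi ν with hπdef
  set μ0 : ℝ := ∫ x, φ x ∂π with hμ0def
  set Y : (Fin (L + 1) → Fin N) → Ω → (Fin (L + 1) → 𝒳) :=
    fun j ω ℓ => X ℓ (j ℓ) ω with hYdef
  have hYm : ∀ j, Measurable (Y j) :=
    fun j => measurable_pi_lambda _ fun ℓ => hmeas ℓ (j ℓ)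
  -- 𝒳 is nonempty and C ≥ 0
  have hXne : Nonempty 𝒳 := by
    by_contra h
    rw [not_nonempty_iff] at h
    have h1 := (hν 0).measure_univ
    rw [Set.univ_eq_empty_iff.mpr h] at h1
    simp at h1
  have hC : 0 ≤ C := by
    obtain ⟨x⟩ := hXne
    exact (abs_nonneg _).trans (hφb fun _ => x)
  -- the law of each product-form tuple is the product measure
  have hlawY : ∀ j, Measure.map (Y j) P = π := by
    intro j
    refine (Measure.pi_eq fun s hs => ?_).symm
    rw [Measure.map_apply (hYm j) (MeasurableSet.univ_pi hs)]
    have hpre : Y j ⁻¹' (Set.pi Set.univ s)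
        = ⋂ p ∈ Finset.univ.image (fun ℓ => (ℓ, j ℓ)),
            (fun q : Fin (L + 1) × Fin N => X q.1 q.2) p ⁻¹' s p.1 := by
      rw [Finset.set_biInter_finset_image]
      ext ω
      simp [Set.mem_pi, hYdef]
    rw [hpre, hindep.measure_inter_preimage_eq_mul _ (sets := fun p => s p.1)
        (fun p _ => hs p.1)]
    rw [Finset.prod_image (by intro a _ b _ h; exact (Prod.mk.injEq _ _ _ _ ▸ h).1 ▸ rfl)]
    refine Finset.prod_congr rfl fun ℓ _ => ?_
    rw [← hlaw ℓ (j ℓ), Measure.map_apply (hmeas ℓ (j ℓ)) (hs ℓ)]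
  -- means
  have hmean : ∀ j, ∫ ω, φ (Y j ω) ∂P = μ0 := by
    intro j
    rw [hμ0def, ← hlawY j,
      integral_map (hYm j).aemeasurable hφmeas.aestronglyMeasurable]
  have hμ0b : |μ0| ≤ C := by
    rw [hμ0def, ← Real.norm_eq_abs]
    calc ‖∫ x, φ x ∂π‖ ≤ C * (π Set.univ).toReal :=
          norm_integral_le_of_norm_le_const (ae_of_all _ fun x => by
            simpa [Real.norm_eq_abs] using hφb x)
      _ = C := by simp
  -- centered variables
  set F : (Fin (L + 1) → Fin N) → Ω → ℝ := fun j ω => φ (Y j ω) - μ0 with hFdef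
  have hFm : ∀ j, Measurable (F j) :=
    fun j => (hφmeas.comp (hYm j)).sub measurable_const
  have hφYint : ∀ j, Integrable (fun ω => φ (Y j ω)) P := fun j =>
    (integrable_const C).mono' (hφmeas.comp (hYm j)).aestronglyMeasurable
      (ae_of_all _ fun ω => by simpa [Real.norm_eq_abs] using hφb (Y j ω))
  have hFint : ∀ j, Integrable (F j) P :=
    fun j => (hφYint j).sub (integrable_const μ0)
  have hFmean : ∀ j, ∫ ω, F j ω ∂P = 0 := by
    intro j
    rw [hFdef]
    rw [integral_sub (hφYint j) (integrable_const μ0), hmean j, integral_const]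
    simp
  have hFbd : ∀ j ω, |F j ω| ≤ C + |μ0| := by
    intro j ω
    calc |F j ω| ≤ |φ (Y j ω)| + |μ0| := abs_sub _ _
      _ ≤ C + |μ0| := add_le_add (hφb _) le_rfl
  have hprod_int : ∀ j j', Integrable (fun ω => F j ω * F j' ω) P := by
    intro j j'
    refine (integrable_const ((C + |μ0|) * (C + |μ0|))).mono'
      ((hFm j).mul (hFm j')).aestronglyMeasurable (ae_of_all _ fun ω => ?_)
    rw [Real.norm_eq_abs, abs_mul]
    exact mul_le_mul (hFbd j ω) (hFbd j' ω) (abs_nonneg _)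
      (add_nonneg hC (abs_nonneg _))
  have hφφint : ∀ j j', Integrable (fun ω => φ (Y j ω) * φ (Y j' ω)) P := by
    intro j j'
    refine (integrable_const (C * C)).mono'
      ((hφmeas.comp (hYm j)).mul (hφmeas.comp (hYm j'))).aestronglyMeasurable
      (ae_of_all _ fun ω => ?_)
    rw [Real.norm_eq_abs, abs_mul]
    exact mul_le_mul (hφb _) (hφb _) (abs_nonneg _) hC
  -- zero covariance for coordinatewise distinct indices
  have key0 : ∀ j j', (∀ ℓ, j ℓ ≠ j' ℓ) → ∫ ω, F j ω * F j' ω ∂P = 0 := by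
    intro j j' hjj
    have hIndφ : IndepFun (fun ω => φ (Y j ω)) (fun ω => φ (Y j' ω)) P := by
      set S := Finset.univ.image (fun ℓ => (ℓ, j ℓ)) with hS
      set T := Finset.univ.image (fun ℓ => (ℓ, j' ℓ)) with hT
      have hST : Disjoint S T := by
        rw [Finset.disjoint_left]
        rintro ⟨ℓ, i⟩ hpS hpT
        simp only [hS, hT, Finset.mem_image, Finset.mem_univ, true_and,
          Prod.mk.injEq] at hpS hpT
        obtain ⟨a, rfl, rfl⟩ := hpS
        obtain ⟨b, hb, hb2⟩ := hpT
        subst hb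
        exact hjj b hb2.symm
      have h := hindep.indepFun_finset S T hST (fun p => hmeas p.1 p.2)
      let gS : ((p : S) → 𝒳) → ℝ := fun v =>
        φ (fun ℓ => v ⟨(ℓ, j ℓ), Finset.mem_image_of_mem _ (Finset.mem_univ ℓ)⟩)
      let gT : ((p : T) → 𝒳) → ℝ := fun v =>
        φ (fun ℓ => v ⟨(ℓ, j' ℓ), Finset.mem_image_of_mem _ (Finset.mem_univ ℓ)⟩)
      have hgS : Measurable gS :=
        hφmeas.comp (measurable_pi_lambda _ fun ℓ => measurable_pi_apply _)
      have hgT : Measurable gT :=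
        hφmeas.comp (measurable_pi_lambda _ fun ℓ => measurable_pi_apply _)
      exact h.comp hgS hgT
    have hIndF : IndepFun (F j) (F j') P :=
      hIndφ.comp (measurable_id.sub measurable_const)
        (measurable_id.sub measurable_const)
    rw [hIndF.integral_fun_mul_eq_mul_integral (hFm j).aestronglyMeasurable (hFm j').aestronglyMeasurable,
      hFmean j, hFmean j']
    ring
  -- uniform covariance bound
  have keyC : ∀ j j', ∫ ω, F j ω * F j' ω ∂P ≤ C ^ 2 := by
    intro j j'
    have hexp : ∫ ω, F j ω * F j' ω ∂P
        = (∫ ω, φ (Y j ω) * φ (Y j' ω) ∂P) - μ0 ^ 2 := by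
      have h1 : ∀ ω, F j ω * F j' ω
          = φ (Y j ω) * φ (Y j' ω) - μ0 * φ (Y j ω) - μ0 * φ (Y j' ω) + μ0 ^ 2 := by
        intro ω; rw [hFdef]; ring
      have hI1 : Integrable (fun ω => μ0 * φ (Y j ω)) P := (hφYint j).const_mul μ0
      have hI1' : Integrable (fun ω => μ0 * φ (Y j' ω)) P := (hφYint j').const_mul μ0
      have hI2 : Integrable (fun ω => φ (Y j ω) * φ (Y j' ω) - μ0 * φ (Y j ω)) P :=
        (hφφint j j').sub hI1
      have hI3 : Integrable
          (fun ω => φ (Y j ω) * φ (Y j' ω) - μ0 * φ (Y j ω) - μ0 * φ (Y j' ω)) P :=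
        hI2.sub hI1'
      rw [integral_congr_ae (ae_of_all _ h1)]
      rw [integral_add hI3 (integrable_const _),
        integral_sub hI2 hI1', integral_sub (hφφint j j') hI1,
        integral_const_mul, integral_const_mul, hmean j, hmean j', integral_const]
      simp
      ring
    rw [hexp]
    have hb : ∫ ω, φ (Y j ω) * φ (Y j' ω) ∂P ≤ C ^ 2 := by
      calc ∫ ω, φ (Y j ω) * φ (Y j' ω) ∂P ≤ ∫ _ω, C ^ 2 ∂P := by
            refine integral_mono (hφφint j j') (integrable_const _) fun ω => ?_
            calc φ (Y j ω) * φ (Y j' ω) ≤ |φ (Y j ω) * φ (Y j' ω)| := le_abs_self _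
              _ = |φ (Y j ω)| * |φ (Y j' ω)| := abs_mul _ _
              _ ≤ C * C := mul_le_mul (hφb _) (hφb _) (abs_nonneg _) hC
              _ = C ^ 2 := (sq C).symm
        _ = C ^ 2 := by simp
    exact (sub_le_self _ (sq_nonneg μ0)).trans hb
  -- abbreviations for counting
  set n : ℝ := (N : ℝ) ^ (L + 1) with hn
  have hNpos : (0 : ℝ) < (N : ℝ) := by exact_mod_cast hN
  have hnpos : (0 : ℝ) < n := pow_pos hNpos _
  have hnne : n ≠ 0 := ne_of_gt hnpos
  have hcard : (Fintype.card (Fin (L + 1) → Fin N) : ℝ) = n := by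
    rw [hn]; simp [Fintype.card_fun]
  -- rewrite the integrand
  have hrw : ∀ ω, (((N : ℝ) ^ (L + 1))⁻¹ *
          (∑ j : Fin (L + 1) → Fin N, φ fun ℓ => X ℓ (j ℓ) ω) - μ0) ^ 2
      = (n⁻¹) ^ 2 * (∑ j : Fin (L + 1) → Fin N, F j ω) ^ 2 := by
    intro ω
    have hsum : ∑ j : Fin (L + 1) → Fin N, F j ω
        = (∑ j : Fin (L + 1) → Fin N, φ fun ℓ => X ℓ (j ℓ) ω) - n * μ0 := by
      rw [hFdef, Finset.sum_sub_distrib, Finset.sum_const, Finset.card_univ]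
      rw [nsmul_eq_mul, hcard]
    rw [hsum, ← hn]
    field_simp
  -- main computation
  calc ∫ ω, (((N : ℝ) ^ (L + 1))⁻¹ *
          (∑ j : Fin (L + 1) → Fin N, φ fun ℓ => X ℓ (j ℓ) ω) - μ0) ^ 2 ∂P
      = ∫ ω, (n⁻¹) ^ 2 * (∑ j : Fin (L + 1) → Fin N, F j ω) ^ 2 ∂P :=
        integral_congr_ae (ae_of_all _ hrw)
    _ = (n⁻¹) ^ 2 * ∫ ω, (∑ j : Fin (L + 1) → Fin N, F j ω) ^ 2 ∂P :=
        integral_const_mul _ _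
    _ = (n⁻¹) ^ 2 * ∑ j : Fin (L + 1) → Fin N, ∑ j' : Fin (L + 1) → Fin N,
          ∫ ω, F j ω * F j' ω ∂P := by
        congr 1
        have h1 : ∀ ω, (∑ j : Fin (L + 1) → Fin N, F j ω) ^ 2
            = ∑ j : Fin (L + 1) → Fin N, ∑ j' : Fin (L + 1) → Fin N,
                F j ω * F j' ω := by
          intro ω; rw [sq, Finset.sum_mul_sum]
        rw [integral_congr_ae (ae_of_all _ h1)]
        rw [integral_finset_sum _ fun j _ =>
          integrable_finset_sum _ fun j' _ => hprod_int j j']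
        exact Finset.sum_congr rfl fun j _ =>
          integral_finset_sum _ fun j' _ => hprod_int j j'
    _ ≤ (n⁻¹) ^ 2 * ∑ j : Fin (L + 1) → Fin N, ∑ j' : Fin (L + 1) → Fin N,
          (C ^ 2 - C ^ 2 * ∏ ℓ, (if j ℓ = j' ℓ then (0:ℝ) else 1)) := by
        refine mul_le_mul_of_nonneg_left ?_ (by positivity)
        refine Finset.sum_le_sum fun j _ => Finset.sum_le_sum fun j' _ => ?_
        by_cases hd : ∀ ℓ, j ℓ ≠ j' ℓ
        · rw [key0 j j' hd]
          have hp : (∏ ℓ, (if j ℓ = j' ℓ then (0:ℝ) else 1)) = 1 :=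
            Finset.prod_eq_one fun ℓ _ => if_neg (hd ℓ)
          rw [hp]; simp
        · push_neg at hd
          obtain ⟨ℓ0, h0⟩ := hd
          have hp : (∏ ℓ, (if j ℓ = j' ℓ then (0:ℝ) else 1)) = 0 :=
            Finset.prod_eq_zero (Finset.mem_univ ℓ0) (if_pos h0)
          rw [hp, mul_zero, sub_zero]
          exact keyC j j'
    _ = (n⁻¹) ^ 2 * (n ^ 2 * C ^ 2 - n * ((N : ℝ) - 1) ^ (L + 1) * C ^ 2) := by
        congr 1
        have hrow : ∀ a : Fin N, ∑ b : Fin N, (if a = b then (0:ℝ) else 1)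
            = (N : ℝ) - 1 := by
          intro a
          have h2 : ∀ b : Fin N, (if a = b then (0:ℝ) else 1)
              = 1 - (if a = b then (1:ℝ) else 0) := by
            intro b; by_cases h : a = b <;> simp [h]
          simp_rw [h2]
          rw [Finset.sum_sub_distrib, Finset.sum_const, Finset.sum_ite_eq]
          simp
        have hinner : ∀ j : Fin (L + 1) → Fin N,
            ∑ j' : Fin (L + 1) → Fin N, ∏ ℓ, (if j ℓ = j' ℓ then (0:ℝ) else 1)
            = ((N : ℝ) - 1) ^ (L + 1) := by
          intro j
          rw [← Fintype.prod_sum (fun ℓ b => if j ℓ = b then (0:ℝ) else 1)]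
          rw [Finset.prod_congr rfl fun ℓ _ => hrow (j ℓ)]
          simp
        have hj : ∀ j : Fin (L + 1) → Fin N,
            ∑ j' : Fin (L + 1) → Fin N,
              (C ^ 2 - C ^ 2 * ∏ ℓ, (if j ℓ = j' ℓ then (0:ℝ) else 1))
            = n * C ^ 2 - C ^ 2 * ((N : ℝ) - 1) ^ (L + 1) := by
          intro j
          rw [Finset.sum_sub_distrib, Finset.sum_const, Finset.card_univ,
            nsmul_eq_mul, hcard, ← Finset.mul_sum, hinner j]
        rw [Finset.sum_congr rfl fun j _ => hj j, Finset.sum_const,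
          Finset.card_univ, nsmul_eq_mul, hcard]
        ring
    _ = (1 - (1 - 1 / (N : ℝ)) ^ (L + 1)) * C ^ 2 := by
        have h1 : (1 - 1 / (N : ℝ)) = ((N : ℝ) - 1) / (N : ℝ) := by
          field_simp
        rw [h1, div_pow, ← hn]
        field_simp
end

section
/- Let E be a compact subset of ℝ^d, let (Θ, 𝒜) be a measurable space, let f : E × Θ → ℝ be bounded, measurable in θ for each fixed ξ, and continuous in ξ for each fixed θ, and let μ be a probability measure on Θ; set I(ξ) = ∫ f(ξ, θ) μ(dθ). On a probability space (Ω, F, P), let (μ_N)_{N ≥ 1} be random probability measures on Θ (i.e., Markov kernels from Ω to Θ) such that for every bounded measurable ψ : Θ → ℝ, the real random variables ω ↦ ∫ ψ d(μ_N(ω)) converge in probability to ∫ ψ dμ as N → ∞. Define I^N(ω, ξ) = ∫ f(ξ, θ) (μ_N(ω))(dθ). Then sup_{ξ ∈ E} | I^N(ξ) − I(ξ) | converges to 0 in probability as N → ∞ (this supremum is a measurable random variable, since f is continuous in ξ). -/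
open MeasureTheory ProbabilityTheory Filter

theorem sup_dense_eq' {X : Type*} [TopologicalSpace X] [Nonempty X]
    {h : X → ℝ} (hc : Continuous h) {B : ℝ} (hB : ∀ x, h x ≤ B)
    {D : Set X} (hD : Dense D) : (⨆ x, h x) = ⨆ x : D, h x := by
  haveI : Nonempty D := hD.nonempty.to_subtype
  have hb1 : BddAbove (Set.range h) := ⟨B, by rintro _ ⟨x, rfl⟩; exact hB x⟩
  have hb2 : BddAbove (Set.range fun x : D => h x) := ⟨B, by rintro _ ⟨x, rfl⟩; exact hB x⟩
  refine le_antisymm (ciSup_le fun x => ?_) (ciSup_le fun x => le_ciSup hb1 x)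
  have hsub : D ⊆ {y : X | h y ≤ ⨆ x : D, h x} := fun d hd => le_ciSup hb2 ⟨d, hd⟩
  have hcl : IsClosed {y : X | h y ≤ ⨆ x : D, h x} := isClosed_le hc continuous_const
  have h2 : closure D ⊆ {y : X | h y ≤ ⨆ x : D, h x} := hcl.closure_subset_iff.mpr hsub
  exact h2 (by rw [hD.closure_eq]; exact Set.mem_univ x)

theorem integrable_of_bdd' {Θ : Type*} [MeasurableSpace Θ] (ν : Measure Θ) [IsFiniteMeasure ν]
    {ψ : Θ → ℝ} {B : ℝ} (hm : Measurable ψ) (hb : ∀ θ, |ψ θ| ≤ B) : Integrable ψ ν :=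
  (integrable_const B).mono' hm.aestronglyMeasurable
    (Filter.Eventually.of_forall (by simpa [Real.norm_eq_abs] using hb))

/-- Uniform-in-`ξ` convergence in probability over a compact design space: if the random
probability measures `μN` converge to `μ` in probability on every bounded measurable test
function, then the random criteria `ξ ↦ ∫ f ξ θ ∂(μN n ω)` converge to
`ξ ↦ ∫ f ξ θ ∂μ` uniformly over the compact set `E`, in probability. -/
theorem stmt7 {d : ℕ} {Θ Ω : Type*} [MeasurableSpace Θ] [MeasurableSpace Ω]
    (P : Measure Ω) [IsProbabilityMeasure P]
    (E : Set (EuclideanSpace ℝ (Fin d))) (hE : IsCompact E)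
    (f : E → Θ → ℝ) (C : ℝ)
    (hfb : ∀ ξ θ, |f ξ θ| ≤ C)
    (hfmeas : ∀ ξ, Measurable (f ξ))
    (hfcont : ∀ θ, Continuous fun ξ : E => f ξ θ)
    (μ : Measure Θ) [IsProbabilityMeasure μ]
    (μN : ℕ → Kernel Ω Θ) (hμN : ∀ n, IsMarkovKernel (μN n))
    (hconv : ∀ ψ : Θ → ℝ, Measurable ψ → (∃ B, ∀ x, |ψ x| ≤ B) →
      ∀ ε > (0 : ℝ),
        Tendsto (fun n => P {ω | ε ≤ |(∫ θ, ψ θ ∂(μN n ω)) - ∫ θ, ψ θ ∂μ|})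
          atTop (nhds 0)) :
    ∀ ε > (0 : ℝ),
      Tendsto (fun n =>
          P {ω | ε ≤ ⨆ ξ : E, |(∫ θ, f ξ θ ∂(μN n ω)) - ∫ θ, f ξ θ ∂μ|})
        atTop (nhds 0) := by
  intro ε hε
  rcases isEmpty_or_nonempty E with hemp | hne
  · have hempty : ∀ n, {ω | ε ≤ ⨆ ξ : E, |(∫ θ, f ξ θ ∂(μN n ω)) - ∫ θ, f ξ θ ∂μ|} = ∅ := by
      intro n
      ext ω
      simp only [Set.mem_setOf_eq, Set.mem_empty_iff_false, iff_false, not_le,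
        Real.iSup_of_isEmpty]
      exact hε
    simp only [hempty, measure_empty]
    exact tendsto_const_nhds
  haveI : CompactSpace E := isCompact_iff_compactSpace.mp hE
  -- Θ is nonempty since μ is a probability measure
  haveI hΘ : Nonempty Θ := by
    by_contra h
    rw [not_nonempty_iff] at h
    have h1 : μ Set.univ = 1 := measure_univ
    rw [Set.univ_eq_empty_iff.mpr h, measure_empty] at h1
    exact zero_ne_one h1
  have hC : 0 ≤ C := le_trans (abs_nonneg _) (hfb (Classical.arbitrary E) (Classical.arbitrary Θ))
  -- the modulus-of-continuity function
  set g : E → ℝ → Θ → ℝ :=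
    fun ξ0 δ θ => ⨆ p : {ξ : E // dist ξ ξ0 ≤ δ}, |f p.1 θ - f ξ0 θ| with hg_def
  have hidx : ∀ (ξ0 : E) (δ : ℝ), 0 ≤ δ → Nonempty {ξ : E // dist ξ ξ0 ≤ δ} :=
    fun ξ0 δ h => ⟨⟨ξ0, by simp [h]⟩⟩
  have hterm : ∀ (ξ0 ξ : E) (θ : Θ), |f ξ θ - f ξ0 θ| ≤ 2 * C := by
    intro ξ0 ξ θ
    calc |f ξ θ - f ξ0 θ| ≤ |f ξ θ| + |f ξ0 θ| := abs_sub _ _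
      _ ≤ 2 * C := by have := hfb ξ θ; have := hfb ξ0 θ; linarith
  have hbdd : ∀ (ξ0 : E) (δ : ℝ) (θ : Θ),
      BddAbove (Set.range fun p : {ξ : E // dist ξ ξ0 ≤ δ} => |f p.1 θ - f ξ0 θ|) :=
    fun ξ0 δ θ => ⟨2 * C, by rintro _ ⟨p, rfl⟩; exact hterm ξ0 p.1 θ⟩
  have hgge : ∀ (ξ0 : E) (δ : ℝ), 0 ≤ δ → ∀ θ, 0 ≤ g ξ0 δ θ := by
    intro ξ0 δ h θ
    have := le_ciSup (hbdd ξ0 δ θ) (⟨ξ0, by simp [h]⟩ : {ξ : E // dist ξ ξ0 ≤ δ})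
    simpa using this
  have hgle : ∀ (ξ0 : E) (δ : ℝ), 0 ≤ δ → ∀ θ, g ξ0 δ θ ≤ 2 * C := by
    intro ξ0 δ h θ
    haveI := hidx ξ0 δ h
    exact ciSup_le fun p => hterm ξ0 p.1 θ
  have hgbound : ∀ (ξ0 : E) (δ : ℝ) (ξ : E), dist ξ ξ0 ≤ δ → ∀ θ,
      |f ξ θ - f ξ0 θ| ≤ g ξ0 δ θ := by
    intro ξ0 δ ξ hd θ
    exact le_ciSup (hbdd ξ0 δ θ) (⟨ξ, hd⟩ : {ξ : E // dist ξ ξ0 ≤ δ})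
  have hgmeas : ∀ (ξ0 : E) (δ : ℝ), 0 ≤ δ → Measurable (g ξ0 δ) := by
    intro ξ0 δ h
    haveI := hidx ξ0 δ h
    obtain ⟨D, hDc, hDd⟩ :=
      TopologicalSpace.exists_countable_dense {ξ : E // dist ξ ξ0 ≤ δ}
    haveI := hDc.to_subtype
    have heq : g ξ0 δ = fun θ => ⨆ x : D, |f (x : {ξ : E // dist ξ ξ0 ≤ δ}).1 θ - f ξ0 θ| := by
      funext θ
      exact sup_dense_eq'
        ((((hfcont θ).comp continuous_subtype_val).sub continuous_const).abs)
        (fun p => hterm ξ0 p.1 θ) hDd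
    rw [heq]
    exact Measurable.iSup fun x => ((hfmeas _).sub (hfmeas ξ0)).abs
  -- pointwise convergence of g to 0 as δ → 0
  have hgtend : ∀ (ξ0 : E) (θ : Θ),
      Tendsto (fun n : ℕ => g ξ0 (1 / (n + 1)) θ) atTop (nhds 0) := by
    intro ξ0 θ
    rw [Metric.tendsto_atTop]
    intro ε' hε'
    have hcont : ContinuousAt (fun ξ : E => f ξ θ) ξ0 := (hfcont θ).continuousAt
    rw [Metric.continuousAt_iff] at hcont
    obtain ⟨δ', hδ', hd⟩ := hcont (ε' / 2) (by linarith)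
    obtain ⟨N, hN⟩ := exists_nat_gt (1 / δ')
    refine ⟨N, fun n hn => ?_⟩
    have hnn : (0:ℝ) < (n:ℝ) + 1 := by positivity
    have h1 : (1:ℝ) / (n + 1) < δ' := by
      have h2 : (1:ℝ) / δ' < (n:ℝ) + 1 := by
        calc (1:ℝ) / δ' < (N:ℝ) := hN
          _ ≤ (n:ℝ) := by exact_mod_cast hn
          _ ≤ (n:ℝ) + 1 := by linarith
      have h3 : (1:ℝ) < ((n:ℝ) + 1) * δ' := (div_lt_iff₀ hδ').mp h2
      rw [div_lt_iff₀ hnn]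
      linarith
    have hsup : g ξ0 (1 / (n + 1)) θ ≤ ε' / 2 := by
      haveI := hidx ξ0 (1 / (n + 1)) (by positivity)
      refine ciSup_le fun p => ?_
      have : dist p.1 ξ0 < δ' := lt_of_le_of_lt p.2 h1
      have := hd this
      rw [Real.dist_eq] at this
      exact this.le
    have hpos := hgge ξ0 (1 / (n + 1)) (by positivity) θ
    rw [Real.dist_eq, sub_zero, abs_of_nonneg hpos]
    linarith
  -- choose radii
  have hδex : ∀ ξ0 : E, ∃ δ : ℝ, 0 < δ ∧ ∫ θ, g ξ0 δ θ ∂μ < ε / 8 := by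
    intro ξ0
    have hDCT : Tendsto (fun n : ℕ => ∫ θ, g ξ0 (1 / (n + 1)) θ ∂μ) atTop (nhds 0) := by
      have h0 : (0:ℝ) = ∫ _θ, (0:ℝ) ∂μ := by simp
      rw [h0]
      apply tendsto_integral_of_dominated_convergence (fun _ => 2 * C)
      · intro n
        exact (hgmeas ξ0 _ (by positivity)).aestronglyMeasurable
      · exact integrable_const _
      · intro n
        refine Filter.Eventually.of_forall fun θ => ?_
        rw [Real.norm_eq_abs, abs_of_nonneg (hgge ξ0 _ (by positivity) θ)]
        exact hgle ξ0 _ (by positivity) θ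
      · exact Filter.Eventually.of_forall fun θ => hgtend ξ0 θ
    obtain ⟨n, hn⟩ := (hDCT.eventually_lt_const (show (0:ℝ) < ε / 8 by linarith)).exists
    exact ⟨1 / (n + 1), by positivity, hn⟩
  choose δ hδpos hδint using hδex
  -- finite subcover
  obtain ⟨t, ht⟩ := isCompact_univ.elim_finite_subcover
    (fun ξ0 : E => Metric.ball ξ0 (δ ξ0)) (fun ξ0 => Metric.isOpen_ball)
    (fun ξ _ => Set.mem_iUnion.mpr ⟨ξ, Metric.mem_ball_self (hδpos ξ)⟩)
  have htne : t.Nonempty := by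
    rcases Finset.eq_empty_or_nonempty t with rfl | h
    · exfalso
      obtain ⟨i, hi, _⟩ := Set.mem_iUnion₂.mp (ht (Set.mem_univ (Classical.arbitrary E)))
      simp at hi
    · exact h
  have hcard : (0:ℝ) < (t.card : ℝ) := by exact_mod_cast Finset.card_pos.mpr htne
  set c : ℝ := 3 * ε / (8 * t.card) with hc_def
  have hcpos : 0 < c := by positivity
  -- key integral comparison
  have hIbound : ∀ (ν : Measure Θ), IsProbabilityMeasure ν → ∀ (ξ ξ0 : E),
      dist ξ ξ0 ≤ δ ξ0 →
      |(∫ θ, f ξ θ ∂ν) - ∫ θ, f ξ0 θ ∂ν| ≤ ∫ θ, g ξ0 (δ ξ0) θ ∂ν := by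
    intro ν hν ξ ξ0 hd
    haveI := hν
    have h1 : Integrable (f ξ) ν := integrable_of_bdd' ν (hfmeas ξ) (hfb ξ)
    have h2 : Integrable (f ξ0) ν := integrable_of_bdd' ν (hfmeas ξ0) (hfb ξ0)
    rw [← integral_sub h1 h2]
    calc |∫ θ, (f ξ θ - f ξ0 θ) ∂ν| ≤ ∫ θ, |f ξ θ - f ξ0 θ| ∂ν := by
          simpa [Real.norm_eq_abs] using norm_integral_le_integral_norm (fun θ => f ξ θ - f ξ0 θ) (μ := ν)
      _ ≤ ∫ θ, g ξ0 (δ ξ0) θ ∂ν := by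
          refine integral_mono (h1.sub h2).abs ?_ (fun θ => hgbound ξ0 (δ ξ0) ξ hd θ)
          exact integrable_of_bdd' ν (hgmeas ξ0 (δ ξ0) (hδpos ξ0).le)
            (fun θ => by rw [abs_of_nonneg (hgge ξ0 _ (hδpos ξ0).le θ)]
                         exact hgle ξ0 _ (hδpos ξ0).le θ)
  -- the convergences from hconv
  have hA : ∀ i : E, Tendsto
      (fun n => P {ω | c ≤ |(∫ θ, f i θ ∂(μN n ω)) - ∫ θ, f i θ ∂μ|}) atTop (nhds 0) :=
    fun i => hconv (f i) (hfmeas i) ⟨C, hfb i⟩ c hcpos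
  have hB : ∀ i : E, Tendsto
      (fun n => P {ω | c ≤ |(∫ θ, g i (δ i) θ ∂(μN n ω)) - ∫ θ, g i (δ i) θ ∂μ|})
      atTop (nhds 0) :=
    fun i => hconv (g i (δ i)) (hgmeas i (δ i) (hδpos i).le)
      ⟨2 * C, fun θ => by rw [abs_of_nonneg (hgge i _ (hδpos i).le θ)]
                          exact hgle i _ (hδpos i).le θ⟩ c hcpos
  -- event inclusion
  have hsub : ∀ n, {ω | ε ≤ ⨆ ξ : E, |(∫ θ, f ξ θ ∂(μN n ω)) - ∫ θ, f ξ θ ∂μ|} ⊆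
      ⋃ i ∈ t, ({ω | c ≤ |(∫ θ, f i θ ∂(μN n ω)) - ∫ θ, f i θ ∂μ|} ∪
                {ω | c ≤ |(∫ θ, g i (δ i) θ ∂(μN n ω)) - ∫ θ, g i (δ i) θ ∂μ|}) := by
    intro n ω hω
    simp only [Set.mem_setOf_eq] at hω
    by_contra hcon
    simp only [Set.mem_iUnion, Set.mem_union, Set.mem_setOf_eq] at hcon
    push_neg at hcon
    haveI := hμN n
    set A : E → ℝ := fun i => |(∫ θ, f i θ ∂(μN n ω)) - ∫ θ, f i θ ∂μ| with hA_def
    set B : E → ℝ := fun i => |(∫ θ, g i (δ i) θ ∂(μN n ω)) - ∫ θ, g i (δ i) θ ∂μ| with hB_def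
    have hS : ∑ i ∈ t, (A i + B i) < 3 * ε / 4 := by
      calc ∑ i ∈ t, (A i + B i) < ∑ _i ∈ t, (c + c) :=
            Finset.sum_lt_sum_of_nonempty htne fun i hi =>
              add_lt_add (hcon i hi).1 (hcon i hi).2
        _ = t.card * (2 * c) := by
            rw [Finset.sum_const, nsmul_eq_mul]; ring
        _ = 3 * ε / 4 := by
            rw [hc_def]; field_simp; ring
    have hsup : (⨆ ξ : E, |(∫ θ, f ξ θ ∂(μN n ω)) - ∫ θ, f ξ θ ∂μ|) ≤
        (∑ i ∈ t, (A i + B i)) + ε / 4 := by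
      refine ciSup_le fun ξ => ?_
      obtain ⟨i, hit, hξi⟩ := Set.mem_iUnion₂.mp (ht (Set.mem_univ ξ))
      have hd : dist ξ i ≤ δ i := (Metric.mem_ball.mp hξi).le
      have e1 : |(∫ θ, f ξ θ ∂(μN n ω)) - ∫ θ, f i θ ∂(μN n ω)| ≤
          ∫ θ, g i (δ i) θ ∂(μN n ω) := hIbound (μN n ω) inferInstance ξ i hd
      have e2 : |(∫ θ, f ξ θ ∂μ) - ∫ θ, f i θ ∂μ| ≤ ∫ θ, g i (δ i) θ ∂μ :=
        hIbound μ inferInstance ξ i hd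
      have e3 : (∫ θ, g i (δ i) θ ∂(μN n ω)) - ∫ θ, g i (δ i) θ ∂μ ≤ B i := le_abs_self _
      have e4 : ∫ θ, g i (δ i) θ ∂μ ≤ ε / 8 := (hδint i).le
      have e5 : A i + B i ≤ ∑ j ∈ t, (A j + B j) :=
        Finset.single_le_sum (f := fun j => A j + B j)
          (fun j _ => add_nonneg (abs_nonneg _) (abs_nonneg _)) hit
      have t1 := abs_sub_le ((∫ θ, f ξ θ ∂(μN n ω))) ((∫ θ, f i θ ∂(μN n ω))) ((∫ θ, f ξ θ ∂μ))
      have t2 := abs_sub_le ((∫ θ, f i θ ∂(μN n ω))) ((∫ θ, f i θ ∂μ)) ((∫ θ, f ξ θ ∂μ))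
      have e2' : |(∫ θ, f i θ ∂μ) - ∫ θ, f ξ θ ∂μ| ≤ ∫ θ, g i (δ i) θ ∂μ := by
        rw [abs_sub_comm]; exact e2
      have hAi : |(∫ θ, f i θ ∂(μN n ω)) - ∫ θ, f i θ ∂μ| = A i := rfl
      linarith
    linarith
  -- conclude by squeezing
  have hsumto : Tendsto (fun n => ∑ i ∈ t,
      (P {ω | c ≤ |(∫ θ, f i θ ∂(μN n ω)) - ∫ θ, f i θ ∂μ|} +
       P {ω | c ≤ |(∫ θ, g i (δ i) θ ∂(μN n ω)) - ∫ θ, g i (δ i) θ ∂μ|}))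
      atTop (nhds 0) := by
    have := tendsto_finset_sum t (fun i _ => (hA i).add (hB i))
    simpa using this
  refine tendsto_of_tendsto_of_tendsto_of_le_of_le tendsto_const_nhds hsumto
    (fun n => zero_le) (fun n => ?_)
  calc P {ω | ε ≤ ⨆ ξ : E, |(∫ θ, f ξ θ ∂(μN n ω)) - ∫ θ, f ξ θ ∂μ|}
      ≤ P (⋃ i ∈ t, ({ω | c ≤ |(∫ θ, f i θ ∂(μN n ω)) - ∫ θ, f i θ ∂μ|} ∪
            {ω | c ≤ |(∫ θ, g i (δ i) θ ∂(μN n ω)) - ∫ θ, g i (δ i) θ ∂μ|})) :=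
        measure_mono (hsub n)
    _ ≤ ∑ i ∈ t, P ({ω | c ≤ |(∫ θ, f i θ ∂(μN n ω)) - ∫ θ, f i θ ∂μ|} ∪
            {ω | c ≤ |(∫ θ, g i (δ i) θ ∂(μN n ω)) - ∫ θ, g i (δ i) θ ∂μ|}) :=
        measure_biUnion_finset_le t _
    _ ≤ _ := Finset.sum_le_sum fun i _ => measure_union_le _ _
end

section
/- Let E be a compact subset of ℝ^d, let (Θ, 𝒜) be a measurable space, let f : E × Θ → ℝ be bounded, measurable in θ for each fixed ξ, and continuous in ξ for each fixed θ, and let μ be a probability measure on Θ; set I(ξ) = ∫ f(ξ, θ) μ(dθ) and assume there is ξ* ∈ E with I(ξ) < I(ξ*) for every ξ ∈ E, ξ ≠ ξ*. On a probability space (Ω, F, P), let (μ_N)_{N ≥ 1} be random probability measures on Θ (i.e., Markov kernels from Ω to Θ) such that for every bounded measurable ψ : Θ → ℝ, the real random variables ω ↦ ∫ ψ d(μ_N(ω)) converge in probability to ∫ ψ dμ as N → ∞; define I^N(ω, ξ) = ∫ f(ξ, θ) (μ_N(ω))(dθ). Suppose there exist nonnegative random variables ρ_N converging to 0 in probability and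 measurable E-valued random elements ξ_N such that liminf_{N → ∞} P( I^N(ξ_N) ≥ I^N(ξ*) − ρ_N ) = 1. Then ξ_N is a consistent estimator of ξ*: for every ε > 0, lim_{N → ∞} P( ‖ξ_N − ξ*‖ ≥ ε ) = 0. -/
open MeasureTheory ProbabilityTheory Filter

/-- Auxiliary: around any point `ξ₀` whose criterion value is `< c`, there is a radius `r > 0`
and a bounded measurable majorant `ψ` of `f ξ ·` for all `ξ` in the ball of radius `r`,
whose integral is still `< c`. -/
private lemma exists_majorant {d : ℕ} {Θ : Type*} [MeasurableSpace Θ]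
    {E : Set (EuclideanSpace ℝ (Fin d))}
    (f : E → Θ → ℝ) (C : ℝ)
    (hfb : ∀ ξ θ, |f ξ θ| ≤ C)
    (hfmeas : ∀ ξ, Measurable (f ξ))
    (hfcont : ∀ θ, Continuous fun ξ : E => f ξ θ)
    (μ : Measure Θ) [IsProbabilityMeasure μ]
    (ξ₀ : E) {c : ℝ} (hlt : (∫ θ, f ξ₀ θ ∂μ) < c) :
    ∃ (ψ : Θ → ℝ) (r : ℝ), 0 < r ∧ Measurable ψ ∧ (∀ θ, |ψ θ| ≤ C) ∧
      (∀ ξ : E, ξ ∈ Metric.ball ξ₀ r → ∀ θ, f ξ θ ≤ ψ θ) ∧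
      (∫ θ, ψ θ ∂μ) < c := by
  obtain ⟨T, hTc, hTd⟩ := TopologicalSpace.exists_countable_dense ↥E
  set S : ℝ → Set ↥E := fun r => insert ξ₀ (T ∩ Metric.ball ξ₀ r) with hSdef
  set g : ℝ → Θ → ℝ := fun r θ => ⨆ p : ↥(S r), f ↑p θ with hgdef
  have hSmem : ∀ r, ξ₀ ∈ S r := fun r => Set.mem_insert _ _
  have hScount : ∀ r, (S r).Countable := fun r =>
    ((hTc.mono Set.inter_subset_left).insert ξ₀)
  have hbdd : ∀ r θ, BddAbove (Set.range fun p : ↥(S r) => f ↑p θ) := by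
    intro r θ
    refine ⟨C, ?_⟩
    rintro x ⟨p, rfl⟩
    exact (abs_le.1 (hfb ↑p θ)).2
  have hub : ∀ r (ξ : ↥E), ξ ∈ S r → ∀ θ, f ξ θ ≤ g r θ := by
    intro r ξ hξ θ
    exact le_ciSup (hbdd r θ) ⟨ξ, hξ⟩
  have hle : ∀ r θ (b : ℝ), (∀ ξ : ↥E, ξ ∈ S r → f ξ θ ≤ b) → g r θ ≤ b := by
    intro r θ b hb
    haveI : Nonempty (↥(S r)) := ⟨⟨ξ₀, hSmem r⟩⟩
    exact ciSup_le fun p => hb ↑p p.2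
  have hgC : ∀ r θ, |g r θ| ≤ C := by
    intro r θ
    rw [abs_le]
    constructor
    · have h1 := (abs_le.1 (hfb ξ₀ θ)).1
      have h2 := hub r ξ₀ (hSmem r) θ
      linarith
    · exact hle r θ C fun ξ _ => (abs_le.1 (hfb ξ θ)).2
  have hgmeas : ∀ r, Measurable (g r) := by
    intro r
    haveI := (hScount r).to_subtype
    exact Measurable.iSup fun p => hfmeas ↑p
  have hball : ∀ r (ξ : ↥E), ξ ∈ Metric.ball ξ₀ r → ∀ θ, f ξ θ ≤ g r θ := by
    intro r ξ hξ θ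
    have hsubcl : Metric.ball ξ₀ r ⊆ closure (S r) := by
      refine (hTd.open_subset_closure_inter Metric.isOpen_ball).trans ?_
      refine closure_mono ?_
      rintro x ⟨hx1, hx2⟩
      exact Set.mem_insert_of_mem _ ⟨hx2, hx1⟩
    have hclosed : IsClosed {x : ↥E | f x θ ≤ g r θ} :=
      isClosed_le (hfcont θ) continuous_const
    have hsub2 : closure (S r) ⊆ {x : ↥E | f x θ ≤ g r θ} :=
      hclosed.closure_subset_iff.2 fun x hx => hub r x hx θ
    exact hsub2 (hsubcl hξ)
  -- pointwise convergence of g (1/(n+1)) θ to f ξ₀ θ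
  have hpt : ∀ θ, Tendsto (fun n : ℕ => g (1 / (n + 1)) θ) atTop (nhds (f ξ₀ θ)) := by
    intro θ
    rw [Metric.tendsto_atTop]
    intro η hη
    obtain ⟨δ, hδpos, hδ⟩ := Metric.continuous_iff.mp (hfcont θ) ξ₀ (η / 2) (by linarith)
    obtain ⟨N, hN⟩ := exists_nat_one_div_lt hδpos
    refine ⟨N, fun n hn => ?_⟩
    have hsub : S (1 / (n + 1)) ⊆ Metric.ball ξ₀ δ := by
      intro x hx
      rcases hx with rfl | hx
      · exact Metric.mem_ball_self hδpos
      · have hd : dist x ξ₀ < 1 / (n + 1) := hx.2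
        have h1 : (1 : ℝ) / (n + 1) ≤ 1 / (N + 1) := by
          apply one_div_le_one_div_of_le
          · positivity
          · exact_mod_cast Nat.succ_le_succ hn
        exact Metric.mem_ball.2 (lt_of_lt_of_le hd (h1.trans hN.le))
    have hup : g (1 / (n + 1)) θ ≤ f ξ₀ θ + η / 2 := by
      refine hle _ _ _ fun ξ hξ => ?_
      have := hδ ξ (hsub hξ)
      rw [Real.dist_eq, abs_lt] at this
      linarith [this.2]
    have hlow : f ξ₀ θ ≤ g (1 / (n + 1)) θ := hub _ ξ₀ (hSmem _) θ
    rw [Real.dist_eq, abs_lt]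
    constructor <;> linarith
  have hINT : Tendsto (fun n : ℕ => ∫ θ, g (1 / (n + 1)) θ ∂μ) atTop
      (nhds (∫ θ, f ξ₀ θ ∂μ)) := by
    refine tendsto_integral_of_dominated_convergence (fun _ => C)
      (fun n => (hgmeas _).aestronglyMeasurable) (integrable_const C)
      (fun n => ae_of_all _ fun θ => ?_) (ae_of_all _ hpt)
    simpa [Real.norm_eq_abs] using hgC (1 / (n + 1)) θ
  obtain ⟨n, hn⟩ := (hINT.eventually_lt_const hlt).exists
  exact ⟨g (1 / (n + 1)), 1 / (n + 1), by positivity, hgmeas _, hgC _,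
    fun ξ hξ θ => hball _ ξ hξ θ, hn⟩

/-- Consistency of the sequential design estimators: under uniform convergence in
probability of the particle criteria (ensured by convergence of the random measures `μN`
on bounded measurable test functions), a unique global maximizer `ξ*` of
`I ξ = ∫ f ξ θ ∂μ` on the compact set `E`, and near-maximization of the random criteria by
`ξN` up to slacks `ρN → 0` in probability, the estimators `ξN` converge to `ξ*` in
probability. -/
theorem stmt9 {d : ℕ} {Θ Ω : Type*} [MeasurableSpace Θ] [MeasurableSpace Ω]
    (P : Measure Ω) [IsProbabilityMeasure P]
    (E : Set (EuclideanSpace ℝ (Fin d))) (hE : IsCompact E)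
    (f : E → Θ → ℝ) (C : ℝ)
    (hfb : ∀ ξ θ, |f ξ θ| ≤ C)
    (hfmeas : ∀ ξ, Measurable (f ξ))
    (hfcont : ∀ θ, Continuous fun ξ : E => f ξ θ)
    (μ : Measure Θ) [IsProbabilityMeasure μ]
    (ξs : E)
    (hmax : ∀ ξ : E, ξ ≠ ξs → (∫ θ, f ξ θ ∂μ) < ∫ θ, f ξs θ ∂μ)
    (μN : ℕ → Kernel Ω Θ) (hμN : ∀ n, IsMarkovKernel (μN n))
    (hconv : ∀ ψ : Θ → ℝ, Measurable ψ → (∃ B, ∀ x, |ψ x| ≤ B) →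
      ∀ ε > (0 : ℝ),
        Tendsto (fun n => P {ω | ε ≤ |(∫ θ, ψ θ ∂(μN n ω)) - ∫ θ, ψ θ ∂μ|})
          atTop (nhds 0))
    (ρ : ℕ → Ω → ℝ) (hρ_nonneg : ∀ n ω, 0 ≤ ρ n ω) (hρ_meas : ∀ n, Measurable (ρ n))
    (hρ_tendsto : ∀ ε > (0 : ℝ),
      Tendsto (fun n => P {ω | ε ≤ ρ n ω}) atTop (nhds 0))
    (ξN : ℕ → Ω → E) (hξN_meas : ∀ n, Measurable (ξN n))
    (hliminf : liminf (fun n =>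
        P {ω | (∫ θ, f ξs θ ∂(μN n ω)) - ρ n ω ≤ ∫ θ, f (ξN n ω) θ ∂(μN n ω)})
      atTop = 1) :
    ∀ ε > (0 : ℝ),
      Tendsto (fun n => P {ω | ε ≤ ‖(ξN n ω : EuclideanSpace ℝ (Fin d)) - ξs‖})
        atTop (nhds 0) := by
  intro ε hε
  haveI : CompactSpace E := isCompact_iff_compactSpace.mp hE
  -- integrability of bounded measurable functions against probability measures
  have hint : ∀ (ν : Measure Θ), IsProbabilityMeasure ν → ∀ (ψ : Θ → ℝ), Measurable ψ →
      (∀ θ, |ψ θ| ≤ C) → Integrable ψ ν := by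
    intro ν hν ψ hm hb
    exact ⟨hm.aestronglyMeasurable,
      HasFiniteIntegral.of_bounded (C := C) (ae_of_all _ fun θ => by
        simpa [Real.norm_eq_abs] using hb θ)⟩
  set K : Set ↥E :=
    {ξ : ↥E | ε ≤ ‖(ξ : EuclideanSpace ℝ (Fin d)) - (ξs : EuclideanSpace ℝ (Fin d))‖}
    with hKdef
  by_cases hKne : K.Nonempty
  swap
  · have hempty : ∀ n, {ω | ε ≤ ‖(ξN n ω : EuclideanSpace ℝ (Fin d)) - ξs‖} = (∅ : Set Ω) := by
      intro n
      ext ω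
      simp only [Set.mem_setOf_eq, Set.mem_empty_iff_false, iff_false, not_le]
      by_contra h
      push_neg at h
      exact hKne ⟨ξN n ω, h⟩
    have : (fun n => P {ω | ε ≤ ‖(ξN n ω : EuclideanSpace ℝ (Fin d)) - ξs‖})
        = fun _ => (0 : ENNReal) := by
      funext n; rw [hempty n, measure_empty]
    rw [this]
    exact tendsto_const_nhds
  -- main case: K nonempty, compact
  have hKclosed : IsClosed K := by
    have : K = (fun ξ : ↥E => ‖(ξ : EuclideanSpace ℝ (Fin d)) - (ξs : EuclideanSpace ℝ (Fin d))‖)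
        ⁻¹' Set.Ici ε := rfl
    rw [this]
    exact IsClosed.preimage ((continuous_subtype_val.sub continuous_const).norm) isClosed_Ici
  have hKcompact : IsCompact K := hKclosed.isCompact
  -- choose majorants for each point of K
  have hrex : ∀ i : ↥K, ∃ (ψ : Θ → ℝ) (r : ℝ), 0 < r ∧ Measurable ψ ∧ (∀ θ, |ψ θ| ≤ C) ∧
      (∀ ξ : ↥E, ξ ∈ Metric.ball (i : ↥E) r → ∀ θ, f ξ θ ≤ ψ θ) ∧
      (∫ θ, ψ θ ∂μ) < ∫ θ, f ξs θ ∂μ := by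
    intro i
    have hne : (i : ↥E) ≠ ξs := by
      intro h
      have hi2 : ε ≤ ‖((i : ↥E) : EuclideanSpace ℝ (Fin d)) - (ξs : EuclideanSpace ℝ (Fin d))‖ := i.2
      rw [h] at hi2
      simp at hi2
      linarith
    exact exists_majorant f C hfb hfmeas hfcont μ (i : ↥E) (hmax _ hne)
  choose ψ r hrpos hψmeas hψC hψub hψlt using hrex
  obtain ⟨t, ht⟩ := hKcompact.elim_finite_subcover
    (fun i : ↥K => Metric.ball (i : ↥E) (r i)) (fun i => Metric.isOpen_ball)
    (fun ξ hξ => Set.mem_iUnion.2 ⟨⟨ξ, hξ⟩, Metric.mem_ball_self (hrpos _)⟩)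
  obtain ⟨ξ₁, hξ₁⟩ := hKne
  have htne : t.Nonempty := by
    obtain ⟨i, hi, -⟩ := Set.mem_iUnion₂.1 (ht hξ₁)
    exact ⟨i, hi⟩
  set δ : ℝ := t.inf' htne (fun i => (∫ θ, f ξs θ ∂μ) - ∫ θ, ψ i θ ∂μ) with hδdef
  have hδpos : 0 < δ := by
    rw [hδdef, Finset.lt_inf'_iff]
    exact fun i _ => sub_pos.2 (hψlt i)
  set η : ℝ := δ / 3 with hηdef
  have hηpos : 0 < η := by positivity
  -- measurability of the near-maximization events
  have hAmeas : ∀ n, MeasurableSet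
      {ω | (∫ θ, f ξs θ ∂(μN n ω)) - ρ n ω ≤ ∫ θ, f (ξN n ω) θ ∂(μN n ω)} := by
    intro n
    haveI := hμN n
    have hm1 : Measurable fun ω => ∫ θ, f ξs θ ∂(μN n ω) := by
      have h : StronglyMeasurable fun p : Ω × Θ => f ξs p.2 :=
        ((hfmeas ξs).comp measurable_snd).stronglyMeasurable
      exact h.integral_kernel_prod_right'.measurable
    have hu : Measurable (Function.uncurry f) :=
      measurable_uncurry_of_continuous_of_measurable hfcont hfmeas
    have hm2 : Measurable fun ω => ∫ θ, f (ξN n ω) θ ∂(μN n ω) := by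
      have h : StronglyMeasurable fun p : Ω × Θ => f (ξN n p.1) p.2 :=
        (hu.comp (((hξN_meas n).comp measurable_fst).prodMk measurable_snd)).stronglyMeasurable
      exact h.integral_kernel_prod_right'.measurable
    exact measurableSet_le (hm1.sub (hρ_meas n)) hm2
  -- P(A n) → 1 hence P((A n)ᶜ) → 0
  have hA1 : Tendsto (fun n =>
      P {ω | (∫ θ, f ξs θ ∂(μN n ω)) - ρ n ω ≤ ∫ θ, f (ξN n ω) θ ∂(μN n ω)})
      atTop (nhds 1) := by
    refine tendsto_of_le_liminf_of_limsup_le (le_of_eq hliminf.symm) ?_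
    exact limsup_le_of_le (by isBoundedDefault) (Eventually.of_forall fun n => prob_le_one)
  have hAc : Tendsto (fun n =>
      P {ω | (∫ θ, f ξs θ ∂(μN n ω)) - ρ n ω ≤ ∫ θ, f (ξN n ω) θ ∂(μN n ω)}ᶜ)
      atTop (nhds 0) := by
    have h := ENNReal.Tendsto.sub
      (tendsto_const_nhds : Tendsto (fun _ : ℕ => (1 : ENNReal)) atTop (nhds 1)) hA1
      (Or.inl ENNReal.one_ne_top)
    rw [tsub_self] at h
    refine h.congr fun n => ?_
    rw [measure_compl (hAmeas n) (measure_ne_top P _), measure_univ]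
  -- the event inclusion
  have hincl : ∀ n, {ω | ε ≤ ‖(ξN n ω : EuclideanSpace ℝ (Fin d)) - ξs‖} ⊆
      {ω | (∫ θ, f ξs θ ∂(μN n ω)) - ρ n ω ≤ ∫ θ, f (ξN n ω) θ ∂(μN n ω)}ᶜ ∪
      ({ω | η ≤ ρ n ω} ∪
      ({ω | η ≤ |(∫ θ, f ξs θ ∂(μN n ω)) - ∫ θ, f ξs θ ∂μ|} ∪
      ⋃ i ∈ t, {ω | η ≤ |(∫ θ, ψ i θ ∂(μN n ω)) - ∫ θ, ψ i θ ∂μ|})) := by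
    intro n ω hω
    rw [Set.mem_union, Set.mem_union, Set.mem_union]
    by_contra hcon
    push_neg at hcon
    obtain ⟨h1, h2, h3, h4⟩ := hcon
    rw [Set.notMem_compl_iff, Set.mem_setOf_eq] at h1
    rw [Set.mem_setOf_eq, not_le] at h2
    rw [Set.mem_setOf_eq, not_le] at h3
    simp only [Set.mem_iUnion, Set.mem_setOf_eq, not_exists, not_le] at h4
    have hmem : ξN n ω ∈ K := hω
    obtain ⟨i, hi, hballmem⟩ := Set.mem_iUnion₂.1 (ht hmem)
    haveI := hμN n
    have hPM : IsProbabilityMeasure (μN n ω) := inferInstance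
    have hch : ∫ θ, f (ξN n ω) θ ∂(μN n ω) ≤ ∫ θ, ψ i θ ∂(μN n ω) := by
      refine integral_mono (hint _ hPM _ (hfmeas _) (hfb _))
        (hint _ hPM _ (hψmeas i) (hψC i)) fun θ => ?_
      exact hψub i _ hballmem θ
    have h5 : δ ≤ (∫ θ, f ξs θ ∂μ) - ∫ θ, ψ i θ ∂μ := Finset.inf'_le _ hi
    have h6 := h4 i hi
    rw [abs_lt] at h3 h6
    have hδη : δ = 3 * η := by rw [hηdef]; ring
    linarith [h3.1, h3.2, h6.1, h6.2]
  -- assemble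
  have hsum : ∀ n, P {ω | ε ≤ ‖(ξN n ω : EuclideanSpace ℝ (Fin d)) - ξs‖} ≤
      P {ω | (∫ θ, f ξs θ ∂(μN n ω)) - ρ n ω ≤ ∫ θ, f (ξN n ω) θ ∂(μN n ω)}ᶜ +
      (P {ω | η ≤ ρ n ω} +
      (P {ω | η ≤ |(∫ θ, f ξs θ ∂(μN n ω)) - ∫ θ, f ξs θ ∂μ|} +
      ∑ i ∈ t, P {ω | η ≤ |(∫ θ, ψ i θ ∂(μN n ω)) - ∫ θ, ψ i θ ∂μ|})) := by
    intro n
    refine (measure_mono (hincl n)).trans ?_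
    refine (measure_union_le _ _).trans (add_le_add le_rfl ?_)
    refine (measure_union_le _ _).trans (add_le_add le_rfl ?_)
    refine (measure_union_le _ _).trans (add_le_add le_rfl ?_)
    exact measure_biUnion_finset_le t _
  have hlim : Tendsto (fun n =>
      P {ω | (∫ θ, f ξs θ ∂(μN n ω)) - ρ n ω ≤ ∫ θ, f (ξN n ω) θ ∂(μN n ω)}ᶜ +
      (P {ω | η ≤ ρ n ω} +
      (P {ω | η ≤ |(∫ θ, f ξs θ ∂(μN n ω)) - ∫ θ, f ξs θ ∂μ|} +
      ∑ i ∈ t, P {ω | η ≤ |(∫ θ, ψ i θ ∂(μN n ω)) - ∫ θ, ψ i θ ∂μ|})))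
      atTop (nhds 0) := by
    have hsumlim : Tendsto (fun n =>
        ∑ i ∈ t, P {ω | η ≤ |(∫ θ, ψ i θ ∂(μN n ω)) - ∫ θ, ψ i θ ∂μ|}) atTop (nhds 0) := by
      have := tendsto_finset_sum t
        (fun i _ => hconv (ψ i) (hψmeas i) ⟨C, hψC i⟩ η hηpos)
      simpa using this
    have := hAc.add ((hρ_tendsto η hηpos).add
      ((hconv (f ξs) (hfmeas ξs) ⟨C, hfb ξs⟩ η hηpos).add hsumlim))
    simpa using this
  exact tendsto_of_tendsto_of_tendsto_of_le_of_le tendsto_const_nhds hlim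
    (fun n => zero_le) hsum
end
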